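/- The commutator width of Z ≀ Z is 1, i.e., every element of the commutator subgroup of Z ≀ Z is a commutator. -/

import Mathlib

lemma emd_one (x : ℤ →₀ ℤ) : Finsupp.equivMapDomain (1 : Equiv.Perm ℤ) x = x := by
  ext i; simp [Finsupp.equivMapDomain_apply]; rfl

lemma emd_mul (e f : Equiv.Perm ℤ) (x : ℤ →₀ ℤ) :
    Finsupp.equivMapDomain (e * f) x = Finsupp.equivMapDomain e (Finsupp.equivMapDomain f x) := by
  ext i; simp [Finsupp.equivMapDomain_apply]; rfl

/-- The shift automorphism of the base group of `ℤ ≀ ℤ`. -/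
noncomputable def shiftAut (k : ℤ) : Multiplicative (ℤ →₀ ℤ) ≃* Multiplicative (ℤ →₀ ℤ) :=
  AddEquiv.toMultiplicative (Finsupp.domCongr (Equiv.addRight k))

/-- The action of the top group `ℤ` on the base group `⨁_{i ∈ ℤ} ℤ` by shifting indices. -/
noncomputable def wrφ : Multiplicative ℤ →* MulAut (Multiplicative (ℤ →₀ ℤ)) where
  toFun k := shiftAut k.toAdd
  map_one' := by
    ext f
    simp [shiftAut, Finsupp.domCongr_apply, emd_one]
  map_mul' k l := by
    ext f
    simp [shiftAut, Finsupp.domCongr_apply, MulAut.mul_apply, emd_mul]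
    try simp [Finsupp.equivMapDomain_apply]
    try ring_nf

/-- The restricted wreath product `ℤ ≀ ℤ`, realized as the semidirect product
of the base group `⨁_{i ∈ ℤ} ℤ` by `ℤ` acting by shifts. -/
noncomputable abbrev ZwrZ : Type :=
  SemidirectProduct (Multiplicative (ℤ →₀ ℤ)) (Multiplicative ℤ) wrφ

/-- The standard generator `a` of `ℤ ≀ ℤ` (generator of the 0-th base copy of `ℤ`). -/
noncomputable def aGen : ZwrZ := SemidirectProduct.inl (Multiplicative.ofAdd (Finsupp.single 0 1))

/-- The standard generator `b` of `ℤ ≀ ℤ` (generator of the acting copy of `ℤ`). -/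
noncomputable def bGen : ZwrZ := SemidirectProduct.inr (Multiplicative.ofAdd 1)

/-- The embedding of a base-group element `c = (n_i)_{i ∈ ℤ}` into `ℤ ≀ ℤ`. -/
noncomputable def base (c : ℤ →₀ ℤ) : ZwrZ := SemidirectProduct.inl (Multiplicative.ofAdd c)

open scoped commutatorElement


section aux

open Finsupp SemidirectProduct

/-- Sum of coordinates as an additive hom. -/
noncomputable def sumCoords : (ℤ →₀ ℤ) →+ ℤ :=
  Finsupp.liftAddHom (fun _ => AddMonoidHom.id ℤ)

lemma sumCoords_single (a b : ℤ) : sumCoords (Finsupp.single a b) = b := by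
  rw [sumCoords, Finsupp.liftAddHom_apply_single]; rfl

lemma wrφ_apply (k : Multiplicative ℤ) (n : Multiplicative (ℤ →₀ ℤ)) :
    wrφ k n = Multiplicative.ofAdd (Finsupp.equivMapDomain (Equiv.addRight k.toAdd) n.toAdd) := rfl

lemma tm_apply (n : Multiplicative (ℤ →₀ ℤ)) :
    (AddMonoidHom.toMultiplicative sumCoords) n = Multiplicative.ofAdd (sumCoords n.toAdd) := rfl

lemma sumCoords_equivMapDomain (e : ℤ ≃ ℤ) (f : ℤ →₀ ℤ) :
    sumCoords (Finsupp.equivMapDomain e f) = sumCoords f := by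
  simp only [sumCoords, Finsupp.liftAddHom_apply, Finsupp.equivMapDomain_eq_mapDomain]
  exact Finsupp.sum_mapDomain_index_addMonoidHom (fun _ => AddMonoidHom.id ℤ)

/-- `u ↦ u - shift u` as an additive hom. -/
noncomputable def Dhom : (ℤ →₀ ℤ) →+ (ℤ →₀ ℤ) :=
  AddMonoidHom.id _ - (Finsupp.domCongr (M := ℤ) (Equiv.addRight (1:ℤ))).toAddMonoidHom

lemma Dhom_apply (u : ℤ →₀ ℤ) :
    Dhom u = u - Finsupp.equivMapDomain (Equiv.addRight (1:ℤ)) u := rfl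

lemma single_sub_single_mem_range (a : ℤ) :
    Finsupp.single a (1:ℤ) - Finsupp.single 0 1 ∈ Dhom.range := by
  have key : ∀ a : ℤ, Finsupp.single a (1:ℤ) - Finsupp.single (a+1) 1 ∈ Dhom.range := by
    intro a
    exact ⟨Finsupp.single a 1, by
      rw [Dhom_apply, Finsupp.equivMapDomain_single]
      rfl⟩
  induction a using Int.induction_on with
  | zero => simpa using AddSubgroup.zero_mem Dhom.range
  | succ k ih =>
      have := AddSubgroup.sub_mem _ ih (key k)
      have h2 : Finsupp.single ((k:ℤ)) (1:ℤ) - Finsupp.single 0 1 -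
          (Finsupp.single (k:ℤ) 1 - Finsupp.single ((k:ℤ)+1) 1)
          = Finsupp.single ((k:ℤ)+1) 1 - Finsupp.single 0 1 := by abel
      rwa [h2] at this
  | pred k ih =>
      have := AddSubgroup.add_mem _ ih (key (-(k:ℤ)-1))
      have h2 : Finsupp.single (-(k:ℤ)) (1:ℤ) - Finsupp.single 0 1 +
          (Finsupp.single (-(k:ℤ)-1) 1 - Finsupp.single (-(k:ℤ)-1+1) 1)
          = Finsupp.single (-(k:ℤ)-1) 1 - Finsupp.single 0 1 := by
        have : -(k:ℤ)-1+1 = -(k:ℤ) := by ring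
        rw [this]; abel
      rwa [h2] at this

lemma sub_single_mem_range (c : ℤ →₀ ℤ) :
    c - Finsupp.single 0 (sumCoords c) ∈ Dhom.range := by
  induction c using Finsupp.induction_linear with
  | zero => simpa using AddSubgroup.zero_mem Dhom.range
  | add f g hf hg =>
      have := AddSubgroup.add_mem _ hf hg
      have h2 : f - Finsupp.single 0 (sumCoords f) + (g - Finsupp.single 0 (sumCoords g))
          = f + g - Finsupp.single 0 (sumCoords (f + g)) := by
        rw [map_add, Finsupp.single_add]; abel
      rwa [h2] at this
  | single a b =>
      have := AddSubgroup.zsmul_mem _ (single_sub_single_mem_range a) b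
      have h2 : b • (Finsupp.single a (1:ℤ) - Finsupp.single 0 1)
          = Finsupp.single a b - Finsupp.single 0 (sumCoords (Finsupp.single a b)) := by
        rw [smul_sub, Finsupp.smul_single, Finsupp.smul_single, sumCoords_single]
        norm_num
      rwa [h2] at this

lemma eq_D_of_sum_zero (c : ℤ →₀ ℤ) (h : sumCoords c = 0) :
    ∃ u : ℤ →₀ ℤ, c = u - Finsupp.equivMapDomain (Equiv.addRight (1:ℤ)) u := by
  have := sub_single_mem_range c
  rw [h, Finsupp.single_zero, sub_zero] at this
  obtain ⟨u, hu⟩ := this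
  exact ⟨u, by rw [← hu, Dhom_apply]⟩

/-- The abelianization map to `ℤ × ℤ`. -/
noncomputable def πab : ZwrZ →* Multiplicative ℤ × Multiplicative ℤ :=
  SemidirectProduct.lift
    ((MonoidHom.inl (Multiplicative ℤ) (Multiplicative ℤ)).comp
      (AddMonoidHom.toMultiplicative sumCoords))
    (MonoidHom.inr (Multiplicative ℤ) (Multiplicative ℤ))
    (by
      intro g
      refine MonoidHom.ext fun n => ?_
      have hs : (AddMonoidHom.toMultiplicative sumCoords) (wrφ g n)
          = (AddMonoidHom.toMultiplicative sumCoords) n := by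
        rw [wrφ_apply, tm_apply, tm_apply]
        exact congrArg Multiplicative.ofAdd (sumCoords_equivMapDomain _ _)
      simp only [MonoidHom.comp_apply, MulEquiv.coe_toMonoidHom, MulAut.conj_apply, hs]
      rw [mul_comm ((MonoidHom.inr (Multiplicative ℤ) (Multiplicative ℤ)) g), mul_inv_cancel_right])

/-- The commutator width of `ℤ ≀ ℤ` is `1`: every element of the commutator subgroup
is a commutator. -/
theorem commutatorWidth_ZwrZ :
    ∀ g ∈ commutator ZwrZ, ∃ x y : ZwrZ, g = ⁅x, y⁆ := by
  intro g hg
  have hker : πab g = 1 := Abelianization.commutator_subset_ker πab hg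
  have hσ : g = SemidirectProduct.inl g.left * SemidirectProduct.inr g.right :=
    (SemidirectProduct.inl_left_mul_inr_right g).symm
  have hval : πab g = (Multiplicative.ofAdd (sumCoords g.left.toAdd), g.right) := by
    nth_rewrite 1 [hσ]
    rw [map_mul]
    simp only [πab, SemidirectProduct.lift_inl, SemidirectProduct.lift_inr, tm_apply]
    ext <;> simp
  rw [hval, Prod.ext_iff] at hker
  obtain ⟨h1, h2⟩ := hker
  have hsum : sumCoords g.left.toAdd = 0 := by
    simpa using h1
  obtain ⟨u, hu⟩ := eq_D_of_sum_zero _ hsum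
  refine ⟨SemidirectProduct.inl (Multiplicative.ofAdd u), bGen, ?_⟩
  have hcomm : ⁅(SemidirectProduct.inl (Multiplicative.ofAdd u) : ZwrZ), bGen⁆
      = (SemidirectProduct.inl (Multiplicative.ofAdd u *
          (wrφ (Multiplicative.ofAdd 1) (Multiplicative.ofAdd u))⁻¹) : ZwrZ) := by
    rw [commutatorElement_def, bGen, map_mul, map_inv, SemidirectProduct.inl_aut, map_inv]
    group
  rw [hcomm]
  have : Multiplicative.ofAdd u * (wrφ (Multiplicative.ofAdd 1) (Multiplicative.ofAdd u))⁻¹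
      = g.left := by
    have hφ : wrφ (Multiplicative.ofAdd 1) (Multiplicative.ofAdd u)
        = Multiplicative.ofAdd (Finsupp.equivMapDomain (Equiv.addRight (1:ℤ)) u) := rfl
    rw [hφ]
    rw [← ofAdd_neg, ← ofAdd_add]
    rw [show u + -(Finsupp.equivMapDomain (Equiv.addRight (1:ℤ)) u) = g.left.toAdd by
      rw [← sub_eq_add_neg, ← hu]]
    rfl
  rw [this]
  have hright : g.right = 1 := h2
  conv_lhs => rw [hσ, hright]
  rw [map_one, mul_one]

end aux
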